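/- Let k = 𝔽_q be a finite field with q ≥ 4 and S = k^t (t ≥ 1 copies of k) with T' the subgroup of S* consisting of tuples with product of coordinates equal to 1. Then the k-linear span of T' inside S equals all of S. -/

import Mathlib

private lemma stmt18_exists_c {k : Type*} [Field k] [Fintype k]
    (hk : 4 ≤ Fintype.card k) : ∃ c : k, c ≠ 0 ∧ c ^ 2 ≠ 1 := by
  classical
  by_contra h
  push_neg at h
  have hsub : (Finset.univ : Finset k) ⊆ {0, 1, -1} := by
    intro x _
    rcases eq_or_ne x 0 with hx | hx
    · simp [hx]
    · have hx2 := h x hx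
      have : (x - 1) * (x + 1) = 0 := by ring_nf; linear_combination hx2
      rcases mul_eq_zero.mp this with h1 | h1
      · have : x = 1 := by linear_combination h1
        simp [this]
      · have : x = -1 := by linear_combination h1
        simp [this]
  have hcard : Fintype.card k ≤ 3 := by
    calc Fintype.card k = (Finset.univ : Finset k).card := rfl
    _ ≤ ({0, 1, -1} : Finset k).card := Finset.card_le_card hsub
    _ ≤ 3 := by
      apply le_trans (Finset.card_insert_le _ _)
      exact Nat.succ_le_succ (le_trans (Finset.card_insert_le _ _)
        (Nat.succ_le_succ (Finset.card_singleton _).le))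
  omega

private lemma stmt18_prod_update2 {k : Type*} [Field k] {t : ℕ} (i j : Fin t)
    (hij : j ≠ i) (a b : k) :
    ∏ m, Function.update (Function.update (1 : Fin t → k) i a) j b m = a * b := by
  classical
  rw [Finset.prod_update_of_mem (Finset.mem_univ j), Finset.sdiff_singleton_eq_erase]
  rw [Finset.prod_update_of_mem (Finset.mem_erase.mpr ⟨fun h => hij h.symm, Finset.mem_univ i⟩),
    Finset.sdiff_singleton_eq_erase]
  simp [mul_comm]

theorem stmt18 {k : Type*} [Field k] [Fintype k] (hk : 4 ≤ Fintype.card k)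
    (t : ℕ) (ht : 1 ≤ t) :
    Submodule.span k {v : Fin t → k | (∀ i, v i ≠ 0) ∧ ∏ i, v i = 1} = ⊤ := by
  obtain ⟨c, hc0, hc2⟩ := stmt18_exists_c hk
  have hc1 : c - 1 ≠ 0 := by
    intro h; apply hc2; have : c = 1 := by linear_combination h
    simp [this]
  have hcn1 : c + 1 ≠ 0 := by
    intro h; apply hc2; have : c = -1 := by linear_combination h
    simp [this]
  set T' : Set (Fin t → k) := {v : Fin t → k | (∀ i, v i ≠ 0) ∧ ∏ i, v i = 1} with hT'
  -- it suffices that every `Pi.single i 1` is in the span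
  have key : ∀ i : Fin t, Pi.single i (1 : k) ∈ Submodule.span k T' := by
    intro i
    have hone : (1 : Fin t → k) ∈ T' := by
      constructor
      · intro m; exact one_ne_zero
      · simp
    by_cases hsub : ∀ j : Fin t, j = i
    · -- t = 1 essentially: single i 1 = 1
      have : Pi.single i (1 : k) = (1 : Fin t → k) := by
        funext m
        rw [hsub m]
        simp
      rw [this]
      exact Submodule.subset_span hone
    · push_neg at hsub
      obtain ⟨j, hij⟩ := hsub
      set u₁ : Fin t → k := Function.update (Function.update (1 : Fin t → k) i c) j c⁻¹ with hu₁
      set u₂ : Fin t → k := Function.update (Function.update (1 : Fin t → k) i (c^2)) j (c^2)⁻¹ with hu₂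
      have hu₁T : u₁ ∈ T' := by
        constructor
        · intro m
          rw [hu₁]
          rcases eq_or_ne m j with h | h
          · subst h; simp [Function.update, hc0]
          · rw [Function.update_of_ne h]
            rcases eq_or_ne m i with h' | h'
            · subst h'; simp [hc0]
            · rw [Function.update_of_ne h']; exact one_ne_zero
        · rw [hu₁, stmt18_prod_update2 i j hij]
          field_simp
      have hu₂T : u₂ ∈ T' := by
        constructor
        · intro m
          rw [hu₂]
          rcases eq_or_ne m j with h | h
          · subst h; simp [Function.update, hc0]
          · rw [Function.update_of_ne h]
            rcases eq_or_ne m i with h' | h'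
            · subst h'; simp [hc0]
            · rw [Function.update_of_ne h']; exact one_ne_zero
        · rw [hu₂, stmt18_prod_update2 i j hij]
          field_simp
      -- coefficients
      set D : k := (c - 1) * (c ^ 2 - 1) with hD
      have hD0 : D ≠ 0 := by
        rw [hD]
        apply mul_ne_zero hc1
        intro h; exact hc2 (by linear_combination h)
      have hrep : Pi.single i (1 : k)
          = D⁻¹ • (1 : Fin t → k) + (-(1 + c) * D⁻¹) • u₁ + (c * D⁻¹) • u₂ := by
        funext m
        simp only [Pi.add_apply, Pi.smul_apply, Pi.one_apply, smul_eq_mul, hu₁, hu₂]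
        rcases eq_or_ne m i with h | h
        · subst h
          rw [Function.update_of_ne hij.symm, Function.update_of_ne hij.symm,
            Function.update_self, Function.update_self, Pi.single_eq_same]
          rw [hD]
          field_simp
          ring
        · rw [Pi.single_eq_of_ne h]
          rcases eq_or_ne m j with h' | h'
          · subst h'
            rw [Function.update_self, Function.update_self, hD]
            field_simp
            ring
          · rw [Function.update_of_ne h', Function.update_of_ne h',
              Function.update_of_ne h, Function.update_of_ne h, Pi.one_apply]
            field_simp
            ring
      rw [hrep]
      exact Submodule.add_mem _ (Submodule.add_mem _
        (Submodule.smul_mem _ _ (Submodule.subset_span hone))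
        (Submodule.smul_mem _ _ (Submodule.subset_span hu₁T)))
        (Submodule.smul_mem _ _ (Submodule.subset_span hu₂T))
  rw [eq_top_iff]
  intro v _
  have hv : v = ∑ i, v i • (Pi.single i 1 : Fin t → k) := by
    funext m
    simp [Pi.single_apply]
  rw [hv]
  exact Submodule.sum_mem _ fun i _ => Submodule.smul_mem _ _ (key i)
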